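/- Let g₀ be a probability measure on a bounded set Θ ⊆ ℝ^d supported on at most J points, let θ₀ ∈ Θ, M := sup_{θ∈Θ}‖θ-θ₀‖, and let g be any probability measure on Θ. Define moment tensors m_{k,ν} := ∫ (θ-θ₀)^{⊗k} dν(θ) and Δ := max_{1≤j≤2J} ‖m_{j,g} - m_{j,g₀}‖₂ (spectral norm). Then for every integer k > 2J, ‖m_{k,g} - m_{k,g₀}‖₂ ≤ k·(M+1)^{2Jk}·Δ. -/

import Mathlib

open MeasureTheory

noncomputable def tensorInner {d k : ℕ} (T : (Fin k → Fin d) → ℝ)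
    (c : Fin k → Fin d → ℝ) : ℝ :=
  ∑ ι : Fin k → Fin d, T ι * ∏ j, c j (ι j)

noncomputable def tensorSpecNorm {d k : ℕ} (T : (Fin k → Fin d) → ℝ) : ℝ :=
  ⨆ c : {c : Fin k → Fin d → ℝ // ∀ j, ∑ i, c j i ^ 2 = 1}, tensorInner T c.1

noncomputable def momentTensor (d k : ℕ) (θ₀ : Fin d → ℝ)
    (ν : Measure (Fin d → ℝ)) : (Fin k → Fin d) → ℝ :=
  fun ι => ∫ θ, ∏ j, (θ (ι j) - θ₀ (ι j)) ∂ν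

open Finset

set_option maxHeartbeats 1000000

section tensor
variable {d k : ℕ}

lemma abs_le_one_of_unit {c : Fin d → ℝ} (hc : ∑ i, c i ^ 2 = 1) (i : Fin d) : |c i| ≤ 1 := by
  have h1 : c i ^ 2 ≤ 1 := by
    rw [← hc]
    exact Finset.single_le_sum (f := fun i => c i ^ 2) (fun _ _ => sq_nonneg _) (mem_univ i)
  have := Real.sqrt_le_sqrt h1
  rwa [Real.sqrt_sq_eq_abs, Real.sqrt_one] at this

lemma abs_tensorInner_le_sum (T : (Fin k → Fin d) → ℝ) (c : Fin k → Fin d → ℝ)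
    (hc : ∀ j, ∑ i, c j i ^ 2 = 1) : |tensorInner T c| ≤ ∑ ι : Fin k → Fin d, |T ι| := by
  refine (Finset.abs_sum_le_sum_abs _ _).trans ?_
  refine Finset.sum_le_sum fun ι _ => ?_
  rw [abs_mul]
  have : |∏ j, c j (ι j)| ≤ 1 := by
    rw [Finset.abs_prod]
    exact Finset.prod_le_one (fun _ _ => abs_nonneg _) (fun j _ => abs_le_one_of_unit (hc j) _)
  calc |T ι| * |∏ j, c j (ι j)| ≤ |T ι| * 1 := by
        exact mul_le_mul_of_nonneg_left this (abs_nonneg _)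
    _ = |T ι| := mul_one _

lemma bddAbove_tensorInner (T : (Fin k → Fin d) → ℝ) :
    BddAbove (Set.range fun c : {c : Fin k → Fin d → ℝ // ∀ j, ∑ i, c j i ^ 2 = 1} =>
      tensorInner T c.1) := by
  refine ⟨∑ ι : Fin k → Fin d, |T ι|, ?_⟩
  rintro x ⟨c, rfl⟩
  exact (le_abs_self _).trans (abs_tensorInner_le_sum T c.1 c.2)

lemma tensorInner_le_specNorm (T : (Fin k → Fin d) → ℝ)
    (c : {c : Fin k → Fin d → ℝ // ∀ j, ∑ i, c j i ^ 2 = 1}) :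
    tensorInner T c.1 ≤ tensorSpecNorm T :=
  le_ciSup (bddAbove_tensorInner T) c

-- product over an updated tuple
lemma prod_update_apply (c : Fin k → Fin d → ℝ) (i : Fin k) (v : Fin d → ℝ) (ι : Fin k → Fin d) :
    ∏ j, Function.update c i v j (ι j) = v (ι i) * ∏ j ∈ univ.erase i, c j (ι j) := by
  rw [← Finset.mul_prod_erase univ (fun j => Function.update c i v j (ι j)) (mem_univ i)]
  congr 1
  · simp
  · exact Finset.prod_congr rfl fun j hj => by
      rw [Function.update_of_ne (Finset.ne_of_mem_erase hj)]

lemma tensorInner_update (T : (Fin k → Fin d) → ℝ) (c : Fin k → Fin d → ℝ) (i : Fin k)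
    (v : Fin d → ℝ) :
    tensorInner T (Function.update c i v) =
      ∑ ι : Fin k → Fin d, T ι * v (ι i) * ∏ j ∈ univ.erase i, c j (ι j) := by
  unfold tensorInner
  refine Finset.sum_congr rfl fun ι _ => ?_
  rw [prod_update_apply, ← mul_assoc]

lemma tensorInner_update_add (T : (Fin k → Fin d) → ℝ) (c : Fin k → Fin d → ℝ) (i : Fin k)
    (v w : Fin d → ℝ) :
    tensorInner T (Function.update c i (v + w)) =
      tensorInner T (Function.update c i v) + tensorInner T (Function.update c i w) := by
  simp only [tensorInner_update, Pi.add_apply]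
  rw [← Finset.sum_add_distrib]
  exact Finset.sum_congr rfl fun ι _ => by ring

lemma tensorInner_update_smul (T : (Fin k → Fin d) → ℝ) (c : Fin k → Fin d → ℝ) (i : Fin k)
    (a : ℝ) (v : Fin d → ℝ) :
    tensorInner T (Function.update c i (a • v)) = a * tensorInner T (Function.update c i v) := by
  simp only [tensorInner_update, Pi.smul_apply, smul_eq_mul, Finset.mul_sum]
  exact Finset.sum_congr rfl fun ι _ => by ring


lemma tensorInner_comp_perm (T : (Fin k → Fin d) → ℝ) (c : Fin k → Fin d → ℝ)
    (e : Equiv.Perm (Fin k)) (hT : ∀ ι : Fin k → Fin d, T (ι ∘ e) = T ι) :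
    tensorInner T (c ∘ e) = tensorInner T c := by
  unfold tensorInner
  rw [← Equiv.sum_comp (Equiv.arrowCongr e (Equiv.refl (Fin d))).symm
    (fun ι => T ι * ∏ j, (c ∘ e) j (ι j))]
  refine Finset.sum_congr rfl fun ι _ => ?_
  have h1 : ((Equiv.arrowCongr e (Equiv.refl (Fin d))).symm ι) = ι ∘ e := rfl
  rw [h1, hT]
  congr 1
  exact Equiv.prod_comp e (fun j => c j (ι j))

lemma tensorInner_pi_smul (T : (Fin k → Fin d) → ℝ) (ε : Fin k → ℝ) (u : Fin k → Fin d → ℝ) :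
    tensorInner T (fun j => ε j • u j) = (∏ j, ε j) * tensorInner T u := by
  unfold tensorInner
  rw [Finset.mul_sum]
  refine Finset.sum_congr rfl fun ι _ => ?_
  simp only [Pi.smul_apply, smul_eq_mul]
  rw [Finset.prod_mul_distrib]
  ring

/-- two-slot update -/
def upd2 (c : Fin k → Fin d → ℝ) (i i' : Fin k) (x y : Fin d → ℝ) : Fin k → Fin d → ℝ :=
  Function.update (Function.update c i x) i' y

lemma upd2_left_eq (c : Fin k → Fin d → ℝ) {i i' : Fin k} (hii : i ≠ i') (x y : Fin d → ℝ) :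
    upd2 c i i' x y = Function.update (Function.update c i' y) i x := by
  unfold upd2; exact Function.update_comm hii x y c

lemma tI_upd2_add_right (T : (Fin k → Fin d) → ℝ) (c : Fin k → Fin d → ℝ) (i i' : Fin k)
    (x y z : Fin d → ℝ) :
    tensorInner T (upd2 c i i' x (y + z)) =
      tensorInner T (upd2 c i i' x y) + tensorInner T (upd2 c i i' x z) :=
  tensorInner_update_add T _ i' y z

lemma tI_upd2_smul_right (T : (Fin k → Fin d) → ℝ) (c : Fin k → Fin d → ℝ) (i i' : Fin k)
    (a : ℝ) (x y : Fin d → ℝ) :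
    tensorInner T (upd2 c i i' x (a • y)) = a * tensorInner T (upd2 c i i' x y) :=
  tensorInner_update_smul T _ i' a y

lemma tI_upd2_add_left (T : (Fin k → Fin d) → ℝ) (c : Fin k → Fin d → ℝ) {i i' : Fin k}
    (hii : i ≠ i') (x y z : Fin d → ℝ) :
    tensorInner T (upd2 c i i' (x + y) z) =
      tensorInner T (upd2 c i i' x z) + tensorInner T (upd2 c i i' y z) := by
  rw [upd2_left_eq c hii, upd2_left_eq c hii, upd2_left_eq c hii]
  exact tensorInner_update_add T _ i x y

lemma tI_upd2_smul_left (T : (Fin k → Fin d) → ℝ) (c : Fin k → Fin d → ℝ) {i i' : Fin k}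
    (hii : i ≠ i') (a : ℝ) (x y : Fin d → ℝ) :
    tensorInner T (upd2 c i i' (a • x) y) = a * tensorInner T (upd2 c i i' x y) := by
  rw [upd2_left_eq c hii, upd2_left_eq c hii]
  exact tensorInner_update_smul T _ i a x

lemma upd2_comp_swap (c : Fin k → Fin d → ℝ) {i i' : Fin k} (hii : i ≠ i') (x y : Fin d → ℝ) :
    (upd2 c i i' x y) ∘ (Equiv.swap i i') = upd2 c i i' y x := by
  funext j
  simp only [Function.comp_apply]
  unfold upd2
  rcases eq_or_ne j i with rfl | hji
  · simp [Equiv.swap_apply_left, Function.update_apply, hii, hii.symm]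
  · rcases eq_or_ne j i' with rfl | hji'
    · simp [Equiv.swap_apply_right, Function.update_apply, hii, hii.symm, hji]
    · simp [Equiv.swap_apply_of_ne_of_ne hji hji', Function.update_apply, hji, hji']

lemma tI_upd2_symm (T : (Fin k → Fin d) → ℝ)
    (hT : ∀ (e : Equiv.Perm (Fin k)) (ι : Fin k → Fin d), T (ι ∘ e) = T ι)
    (c : Fin k → Fin d → ℝ) {i i' : Fin k} (hii : i ≠ i') (x y : Fin d → ℝ) :
    tensorInner T (upd2 c i i' x y) = tensorInner T (upd2 c i i' y x) := by
  rw [← upd2_comp_swap c hii y x]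
  exact tensorInner_comp_perm T _ (Equiv.swap i i') (hT _)

lemma upd2_self (c : Fin k → Fin d → ℝ) (i i' : Fin k) :
    upd2 c i i' (c i) (c i') = c := by
  unfold upd2
  rw [Function.update_eq_self, Function.update_eq_self]

lemma sum_upd2 {i i' : Fin k} (hii : i ≠ i') (c : Fin k → Fin d → ℝ) (x y : Fin d → ℝ) :
    ∑ j, upd2 c i i' x y j = (∑ j, c j) - c i - c i' + x + y := by
  have hmem : i ∈ univ.erase i' := Finset.mem_erase.mpr ⟨hii, mem_univ i⟩
  have h1 : ∑ j, upd2 c i i' x y j = upd2 c i i' x y i' + ∑ j ∈ univ.erase i', upd2 c i i' x y j :=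
    (Finset.add_sum_erase univ _ (mem_univ i')).symm
  have h1' : upd2 c i i' x y i' = y := by simp [upd2]
  have h2 : ∑ j ∈ univ.erase i', upd2 c i i' x y j
      = ∑ j ∈ univ.erase i', Function.update c i x j :=
    Finset.sum_congr rfl fun j hj => Function.update_of_ne (Finset.ne_of_mem_erase hj) _ _
  have h3 : ∑ j ∈ univ.erase i', Function.update c i x j
      = Function.update c i x i + ∑ j ∈ (univ.erase i').erase i, Function.update c i x j :=
    (Finset.add_sum_erase _ _ hmem).symm
  have h3' : Function.update c i x i = x := Function.update_self i x c
  have h4 : ∑ j ∈ (univ.erase i').erase i, Function.update c i x j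
      = ∑ j ∈ (univ.erase i').erase i, c j :=
    Finset.sum_congr rfl fun j hj => Function.update_of_ne (Finset.ne_of_mem_erase hj) _ _
  have h5 : ∑ j, c j = c i' + ∑ j ∈ univ.erase i', c j :=
    (Finset.add_sum_erase univ _ (mem_univ i')).symm
  have h6 : ∑ j ∈ univ.erase i', c j = c i + ∑ j ∈ (univ.erase i').erase i, c j :=
    (Finset.add_sum_erase _ _ hmem).symm
  rw [h1, h1', h2, h3, h3', h4, h5, h6]
  abel


end tensor

section banach
variable {d k : ℕ}

set_option maxHeartbeats 1000000

lemma continuous_tensorInner (T : (Fin k → Fin d) → ℝ) :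
    Continuous fun c : Fin k → Fin d → ℝ => tensorInner T c := by
  unfold tensorInner
  refine continuous_finset_sum _ fun ι _ => Continuous.mul continuous_const ?_
  exact continuous_finset_prod _ fun j _ =>
    (continuous_apply (ι j)).comp (continuous_apply j)

lemma exists_unit_vec (hd : 0 < d) : ∃ u : Fin d → ℝ, ∑ i, u i ^ 2 = 1 := by
  refine ⟨fun i => if i = ⟨0, hd⟩ then 1 else 0, ?_⟩
  rw [Finset.sum_eq_single ⟨0, hd⟩]
  · simp
  · intro b _ hb; simp [hb]
  · simp

theorem banach_diag (hd : 0 < d) (hk : 0 < k) (T : (Fin k → Fin d) → ℝ)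
    (hT : ∀ (e : Equiv.Perm (Fin k)) (ι : Fin k → Fin d), T (ι ∘ e) = T ι) :
    ∃ u : Fin d → ℝ, (∑ i, u i ^ 2 = 1) ∧ ∀ c : Fin k → Fin d → ℝ,
      (∀ j, ∑ i, c j i ^ 2 = 1) → |tensorInner T c| ≤ |tensorInner T (fun _ => u)| := by
  classical
  set C : Set (Fin k → Fin d → ℝ) := {c | ∀ j, ∑ i, c j i ^ 2 = 1} with hC
  have hCclosed : IsClosed C := by
    have : C = ⋂ j, (fun c : Fin k → Fin d → ℝ => ∑ i, c j i ^ 2) ⁻¹' {1} := by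
      ext c; simp [hC, Set.mem_iInter]
    rw [this]
    refine isClosed_iInter fun j => IsClosed.preimage ?_ isClosed_singleton
    exact continuous_finset_sum _ fun i _ =>
      ((continuous_apply i).comp (continuous_apply j)).pow 2
  have hCbdd : Bornology.IsBounded C := by
    rw [Metric.isBounded_iff_subset_closedBall 0]
    refine ⟨1, fun c hc => ?_⟩
    rw [Metric.mem_closedBall, dist_zero_right]
    refine (pi_norm_le_iff_of_nonneg zero_le_one).mpr fun j => ?_
    refine (pi_norm_le_iff_of_nonneg zero_le_one).mpr fun i => ?_
    simpa using abs_le_one_of_unit (hc j) i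
  have hCcompact : IsCompact C := Metric.isCompact_of_isClosed_isBounded hCclosed hCbdd
  obtain ⟨u₀, hu₀⟩ := exists_unit_vec hd
  have hCne : C.Nonempty := ⟨fun _ => u₀, fun _ => hu₀⟩
  set F : (Fin k → Fin d → ℝ) → ℝ := fun c => tensorInner T c with hF
  have hFcont : Continuous fun c => |F c| := (continuous_tensorInner T).abs
  obtain ⟨cm, hcmC, hcm⟩ := hCcompact.exists_isMaxOn hCne hFcont.continuousOn
  set m : ℝ := |F cm| with hm
  set A : Set (Fin k → Fin d → ℝ) := {c | c ∈ C ∧ |F c| = m} with hA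
  have hAsub : A ⊆ C := fun c hc => hc.1
  have hAclosed : IsClosed A := by
    have : A = C ∩ (fun c => |F c|) ⁻¹' {m} := rfl
    rw [this]
    exact hCclosed.inter (IsClosed.preimage hFcont isClosed_singleton)
  have hAcompact : IsCompact A := hCcompact.of_isClosed_subset hAclosed hAsub
  have hAne : A.Nonempty := ⟨cm, hcmC, rfl⟩
  set G : (Fin k → Fin d → ℝ) → ℝ := fun c => ∑ l, (∑ j, c j l) ^ 2 with hG
  have hGcont : Continuous G := by
    refine continuous_finset_sum _ fun l _ => Continuous.pow ?_ 2
    exact continuous_finset_sum _ fun j _ => (continuous_apply l).comp (continuous_apply j)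
  obtain ⟨c, hcA, hcmax⟩ := hAcompact.exists_isMaxOn hAne hGcont.continuousOn
  -- pairwise claim
  have hpair : ∀ i i' : Fin k, c i = c i' ∨ c i = -c i' := by
    intro i i'
    by_contra hcon
    push_neg at hcon
    obtain ⟨hne1, hne2⟩ := hcon
    have hii : i ≠ i' := by rintro rfl; exact hne1 rfl
    set x := c i with hx
    set y := c i' with hy
    set s : ℝ := ∑ l, (x l + y l) ^ 2 with hs
    set s' : ℝ := ∑ l, (x l - y l) ^ 2 with hs'
    have hxu : ∑ l, x l ^ 2 = 1 := hcA.1 i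
    have hyu : ∑ l, y l ^ 2 = 1 := hcA.1 i'
    have hss' : s + s' = 4 := by
      rw [hs, hs', ← Finset.sum_add_distrib]
      have he : ∀ l, (x l + y l) ^ 2 + (x l - y l) ^ 2 = 2 * x l ^ 2 + 2 * y l ^ 2 := by
        intro l; ring
      rw [Finset.sum_congr rfl fun l _ => he l, Finset.sum_add_distrib, ← Finset.mul_sum,
        ← Finset.mul_sum, hxu, hyu]
      norm_num
    have hspos : 0 < s := by
      rcases (Finset.sum_nonneg fun l _ => sq_nonneg (x l + y l)).lt_or_eq with h | h
      · exact h
      · exfalso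
        apply hne2
        funext l
        have hz := (Finset.sum_eq_zero_iff_of_nonneg
          (fun l _ => sq_nonneg (x l + y l))).mp h.symm l (mem_univ l)
        have hxyl : x l + y l = 0 := by nlinarith [hz]
        simp only [Pi.neg_apply]
        linarith
    have hs'pos : 0 < s' := by
      rcases (Finset.sum_nonneg fun l _ => sq_nonneg (x l - y l)).lt_or_eq with h | h
      · exact h
      · exfalso
        apply hne1
        funext l
        have hz := (Finset.sum_eq_zero_iff_of_nonneg
          (fun l _ => sq_nonneg (x l - y l))).mp h.symm l (mem_univ l)
        have : x l - y l = 0 := by nlinarith [hz]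
        linarith
    set su : ℝ := Real.sqrt s with hsu
    set sv : ℝ := Real.sqrt s' with hsv
    have hsupos : 0 < su := Real.sqrt_pos.mpr hspos
    have hsvpos : 0 < sv := Real.sqrt_pos.mpr hs'pos
    have hsu2 : su ^ 2 = s := Real.sq_sqrt hspos.le
    have hsv2 : sv ^ 2 = s' := Real.sq_sqrt hs'pos.le
    set u : Fin d → ℝ := su⁻¹ • (x + y) with hu
    set v : Fin d → ℝ := sv⁻¹ • (x - y) with hv
    have huunit : ∑ l, u l ^ 2 = 1 := by
      rw [hu]
      simp only [Pi.smul_apply, Pi.add_apply, smul_eq_mul]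
      rw [Finset.sum_congr rfl fun l _ => (mul_pow su⁻¹ (x l + y l) 2),
        ← Finset.mul_sum, ← hs]
      rw [← hsu2]
      field_simp
    have hvunit : ∑ l, v l ^ 2 = 1 := by
      rw [hv]
      simp only [Pi.smul_apply, Pi.sub_apply, smul_eq_mul]
      rw [Finset.sum_congr rfl fun l _ => (mul_pow sv⁻¹ (x l - y l) 2),
        ← Finset.mul_sum, ← hs']
      rw [← hsv2]
      field_simp
    have hxy_u : x + y = su • u := by
      rw [hu, smul_smul, mul_inv_cancel₀ hsupos.ne', one_smul]
    have hxy_v : x - y = sv • v := by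
      rw [hv, smul_smul, mul_inv_cancel₀ hsvpos.ne', one_smul]
    have hlin : ∀ w z : Fin d → ℝ, tensorInner T (upd2 c i i' (w + z) (w + z))
        = tensorInner T (upd2 c i i' w w) + tensorInner T (upd2 c i i' w z)
          + tensorInner T (upd2 c i i' z w) + tensorInner T (upd2 c i i' z z) := by
      intro w z
      rw [tI_upd2_add_left T c hii, tI_upd2_add_right, tI_upd2_add_right]
      ring
    have hsub : ∀ w z : Fin d → ℝ, w - z = w + (-1 : ℝ) • z := by
      intro w z; funext l; simp [sub_eq_add_neg]
    have hpar : 4 * F c = s * tensorInner T (upd2 c i i' u u)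
        - s' * tensorInner T (upd2 c i i' v v) := by
      have e1 : tensorInner T (upd2 c i i' (x + y) (x + y))
          = s * tensorInner T (upd2 c i i' u u) := by
        rw [hxy_u, tI_upd2_smul_left T c hii, tI_upd2_smul_right, ← mul_assoc, ← pow_two, hsu2]
      have e2 : tensorInner T (upd2 c i i' (x - y) (x - y))
          = s' * tensorInner T (upd2 c i i' v v) := by
        rw [hxy_v, tI_upd2_smul_left T c hii, tI_upd2_smul_right, ← mul_assoc, ← pow_two, hsv2]
      have e3 := hlin x y
      have e4 : tensorInner T (upd2 c i i' (x - y) (x - y))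
          = tensorInner T (upd2 c i i' x x) - tensorInner T (upd2 c i i' x y)
            - tensorInner T (upd2 c i i' y x) + tensorInner T (upd2 c i i' y y) := by
        rw [hsub x y, hlin x ((-1 : ℝ) • y)]
        simp only [tI_upd2_smul_right, tI_upd2_smul_left T c hii]
        ring
      have e5 : tensorInner T (upd2 c i i' x y) = F c := by
        rw [hx, hy, upd2_self c i i']
      have e6 : tensorInner T (upd2 c i i' y x) = F c := by
        rw [tI_upd2_symm T hT c hii]; exact e5
      rw [← e1, ← e2, e3, e4, e5, e6]; ring
    have hupdC : ∀ w z : Fin d → ℝ, (∑ l, w l ^ 2 = 1) → (∑ l, z l ^ 2 = 1) →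
        upd2 c i i' w z ∈ C := by
      intro w z hw hz j
      unfold upd2
      rcases eq_or_ne j i' with rfl | hj1
      · rwa [Function.update_self]
      · rw [Function.update_of_ne hj1]
        rcases eq_or_ne j i with rfl | hj2
        · rwa [Function.update_self]
        · rw [Function.update_of_ne hj2]; exact hcA.1 j
    have hFle : ∀ c' ∈ C, |F c'| ≤ m := fun c' hc' => hcm hc'
    have hFuu : |tensorInner T (upd2 c i i' u u)| = m := by
      have h1 : |tensorInner T (upd2 c i i' u u)| ≤ m := hFle _ (hupdC u u huunit huunit)
      have h2 : |tensorInner T (upd2 c i i' v v)| ≤ m := hFle _ (hupdC v v hvunit hvunit)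
      have h3 : 4 * m = |4 * F c| := by rw [abs_mul, hcA.2]; norm_num
      have h4 : |4 * F c| ≤ s * |tensorInner T (upd2 c i i' u u)| + s' * m := by
        rw [hpar]
        refine (abs_sub _ _).trans ?_
        rw [abs_mul, abs_mul, abs_of_pos hspos, abs_of_pos hs'pos]
        have := mul_le_mul_of_nonneg_left h2 hs'pos.le
        linarith
      have h5 : 4 * m ≤ s * |tensorInner T (upd2 c i i' u u)| + s' * m := h3 ▸ h4
      have h6' : s * m + s' * m = 4 * m := by rw [← add_mul, hss']
      have h6 : s * m ≤ s * |tensorInner T (upd2 c i i' u u)| := by linarith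
      have h7 : m ≤ |tensorInner T (upd2 c i i' u u)| :=
        le_of_mul_le_mul_left h6 hspos
      exact le_antisymm h1 h7
    -- sign choice and G contradiction
    set X : Fin d → ℝ := fun l => (∑ j, c j l) - su * u l with hX
    set P : ℝ := ∑ l, X l * u l with hP
    set σ : ℝ := if 0 ≤ P then 1 else -1 with hσ
    have hσ2 : σ ^ 2 = 1 := by
      rcases le_or_gt 0 P with h | h
      · simp [hσ, h]
      · simp [hσ, not_le.mpr h]
    have hσP : σ * P = |P| := by
      rcases le_or_gt 0 P with h | h
      · simp [hσ, h, abs_of_nonneg h]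
      · simp [hσ, not_le.mpr h, abs_of_neg h]
    have hσuunit : ∑ l, (σ • u) l ^ 2 = 1 := by
      simp only [Pi.smul_apply, smul_eq_mul]
      rw [Finset.sum_congr rfl fun l _ => (mul_pow σ (u l) 2), ← Finset.mul_sum, huunit, hσ2]
      ring
    have hcσF : tensorInner T (upd2 c i i' (σ • u) (σ • u))
        = tensorInner T (upd2 c i i' u u) := by
      rw [tI_upd2_smul_left T c hii, tI_upd2_smul_right, ← mul_assoc, ← pow_two, hσ2, one_mul]
    have hcσA : upd2 c i i' (σ • u) (σ • u) ∈ A := by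
      have habs : |tensorInner T (upd2 c i i' (σ • u) (σ • u))| = m := by
        rw [hcσF]; exact hFuu
      exact ⟨hupdC _ _ hσuunit hσuunit, habs⟩
    have hGle : G (upd2 c i i' (σ • u) (σ • u)) ≤ G c := hcmax hcσA
    set Q : ℝ := ∑ l, X l ^ 2 with hQ
    have hsum_c : ∀ l, ∑ j, c j l = X l + su * u l := by
      intro l; rw [hX]; ring
    have hsum_cσ : ∀ l, ∑ j, upd2 c i i' (σ • u) (σ • u) j l = X l + 2 * σ * u l := by
      intro l
      have h := congrFun (sum_upd2 hii c (σ • u) (σ • u)) l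
      simp only [Finset.sum_apply, Pi.sub_apply, Pi.add_apply, Pi.smul_apply, smul_eq_mul] at h
      rw [h]
      have hl : x l + y l = su * u l := by
        have := congrFun hxy_u l
        simpa using this
      rw [hX]
      ring_nf
      linarith [hl]
    have hGc : G c = Q + 2 * su * P + s := by
      rw [hG]
      simp only
      rw [Finset.sum_congr rfl fun l _ => by rw [hsum_c l]]
      have he : ∀ l, (X l + su * u l) ^ 2
          = X l ^ 2 + (2 * su) * (X l * u l) + s * u l ^ 2 := by
        intro l; rw [← hsu2]; ring
      rw [Finset.sum_congr rfl fun l _ => he l, Finset.sum_add_distrib, Finset.sum_add_distrib,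
        ← Finset.mul_sum, ← Finset.mul_sum, huunit, ← hQ, ← hP]
      ring
    have hGcσ : G (upd2 c i i' (σ • u) (σ • u)) = Q + 4 * |P| + 4 := by
      rw [hG]
      simp only
      rw [Finset.sum_congr rfl fun l _ => by rw [hsum_cσ l]]
      have he : ∀ l, (X l + 2 * σ * u l) ^ 2
          = X l ^ 2 + (4 * σ) * (X l * u l) + 4 * σ ^ 2 * u l ^ 2 := by
        intro l; ring
      rw [Finset.sum_congr rfl fun l _ => he l, Finset.sum_add_distrib, Finset.sum_add_distrib,
        ← Finset.mul_sum, ← Finset.mul_sum, huunit, ← hQ, ← hP, hσ2]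
      have : (4 : ℝ) * σ * P = 4 * |P| := by rw [mul_assoc, hσP]
      rw [this]
      ring
    have hslt4 : s < 4 := by linarith
    have hsule2 : su ≤ 2 := by nlinarith
    have h2suP : 2 * su * P ≤ 4 * |P| := by
      nlinarith [le_abs_self P, abs_nonneg P, mul_le_mul_of_nonneg_left (le_abs_self P)
        (by positivity : (0:ℝ) ≤ 2 * su), mul_le_mul_of_nonneg_right hsule2 (abs_nonneg P)]
    rw [hGcσ, hGc] at hGle
    linarith
  -- conclusion
  set i₀ : Fin k := ⟨0, hk⟩ with hi₀
  refine ⟨c i₀, hcA.1 i₀, fun c' hc' => ?_⟩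
  set ε : Fin k → ℝ := fun j => if c j = c i₀ then 1 else -1 with hε
  have hceq : c = fun j => ε j • (c i₀) := by
    funext j
    rcases eq_or_ne (c j) (c i₀) with h | h
    · simp [hε, h]
    · have hd2 : c j = -c i₀ := (hpair j i₀).resolve_left h
      have hεj : ε j = -1 := by simp [hε, h]
      rw [hεj, neg_one_smul]
      exact hd2
  have hFc : F c = (∏ j, ε j) * tensorInner T (fun _ => c i₀) := by
    rw [hF]
    simp only
    conv_lhs => rw [hceq]
    exact tensorInner_pi_smul T ε (fun _ => c i₀)
  have habs : |∏ j, ε j| = 1 := by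
    have hone : ∀ j, |ε j| = 1 := fun j => by
      rcases eq_or_ne (c j) (c i₀) with h | h <;> simp [hε, h]
    rw [Finset.abs_prod]
    calc ∏ j, |ε j| = ∏ _j : Fin k, (1 : ℝ) := Finset.prod_congr rfl fun j _ => hone j
      _ = 1 := Finset.prod_const_one
  have hmeq : m = |tensorInner T (fun _ => c i₀)| := by
    rw [← hcA.2, hFc, abs_mul, habs, one_mul]
  have h1 : |F c'| ≤ m := hcm hc'
  rw [hmeq] at h1
  exact h1

end banach

section meas
variable {d : ℕ}

lemma abs_tensorInner_le_specNorm {k : ℕ} (hk : 0 < k) (T : (Fin k → Fin d) → ℝ)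
    (c : Fin k → Fin d → ℝ) (hc : ∀ j, ∑ i, c j i ^ 2 = 1) :
    |tensorInner T c| ≤ tensorSpecNorm T := by
  have hflip : ∀ j, ∑ i, (Function.update c ⟨0, hk⟩ ((-1 : ℝ) • c ⟨0, hk⟩)) j i ^ 2 = 1 := by
    intro j
    rcases eq_or_ne j ⟨0, hk⟩ with rfl | hj
    · rw [Function.update_self]
      simp only [Pi.smul_apply, smul_eq_mul]
      have he : ∀ i, (-1 * c ⟨0, hk⟩ i) ^ 2 = c ⟨0, hk⟩ i ^ 2 := fun i => by ring
      rw [Finset.sum_congr rfl fun i _ => he i]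
      exact hc ⟨0, hk⟩
    · rw [Function.update_of_ne hj]; exact hc j
  rcases abs_cases (tensorInner T c) with ⟨he, _⟩ | ⟨he, _⟩
  · rw [he]; exact tensorInner_le_specNorm T ⟨c, hc⟩
  · rw [he]
    have hneg : -tensorInner T c
        = tensorInner T (Function.update c ⟨0, hk⟩ ((-1 : ℝ) • c ⟨0, hk⟩)) := by
      rw [tensorInner_update_smul, Function.update_eq_self]; ring
    rw [hneg]
    exact tensorInner_le_specNorm T ⟨_, hflip⟩

lemma integrable_of_boundTheta (Θ : Set (Fin d → ℝ)) (ν : Measure (Fin d → ℝ))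
    [IsFiniteMeasure ν] (hν : ν Θᶜ = 0) (f : (Fin d → ℝ) → ℝ) (hf : Continuous f)
    (C : ℝ) (hC : ∀ θ ∈ Θ, |f θ| ≤ C) : Integrable f ν := by
  have hae : ∀ᵐ θ ∂ν, θ ∈ Θ := by
    rw [MeasureTheory.ae_iff]
    exact hν
  refine Integrable.mono' (integrable_const C) hf.aestronglyMeasurable ?_
  exact hae.mono fun θ h => by simpa using hC θ h

lemma integral_prod_expand (Θ : Set (Fin d → ℝ)) (θ₀ : Fin d → ℝ) (M : ℝ) (hM0 : 0 ≤ M)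
    (hbd : ∀ θ ∈ Θ, ∀ i, |θ i - θ₀ i| ≤ M) (ν : Measure (Fin d → ℝ))
    [IsProbabilityMeasure ν] (hν : ν Θᶜ = 0) (n : ℕ) (c : Fin n → Fin d → ℝ) :
    ∑ ι : Fin n → Fin d, (∫ θ, ∏ j, (θ (ι j) - θ₀ (ι j)) ∂ν) * ∏ j, c j (ι j)
      = ∫ θ, ∏ j, (∑ i, c j i * (θ i - θ₀ i)) ∂ν := by
  have hcont : ∀ ι : Fin n → Fin d, Continuous fun θ : Fin d → ℝ =>
      ∏ j, (θ (ι j) - θ₀ (ι j)) :=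
    fun ι => continuous_finset_prod _ fun j _ => (continuous_apply (ι j)).sub continuous_const
  have hint : ∀ ι : Fin n → Fin d, Integrable (fun θ => ∏ j, (θ (ι j) - θ₀ (ι j))) ν := by
    intro ι
    refine integrable_of_boundTheta Θ ν hν _ (hcont ι) (M ^ n) fun θ hθ => ?_
    rw [Finset.abs_prod]
    calc ∏ j, |θ (ι j) - θ₀ (ι j)| ≤ ∏ _j : Fin n, M :=
          Finset.prod_le_prod (fun j _ => abs_nonneg _) (fun j _ => hbd θ hθ (ι j))
      _ = M ^ n := by rw [Finset.prod_const, Finset.card_univ, Fintype.card_fin]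
  have hpt : ∀ θ : Fin d → ℝ, ∏ j, (∑ i, c j i * (θ i - θ₀ i))
      = ∑ ι : Fin n → Fin d, ∏ j, (c j (ι j) * (θ (ι j) - θ₀ (ι j))) := by
    intro θ
    rw [Finset.prod_univ_sum]
    simp [Fintype.piFinset_univ]
  have hfac : ∀ ι : Fin n → Fin d, (fun θ : Fin d → ℝ => ∏ j, (c j (ι j) * (θ (ι j) - θ₀ (ι j))))
      = fun θ => (∏ j, c j (ι j)) * ∏ j, (θ (ι j) - θ₀ (ι j)) := by
    intro ι; funext θ; rw [Finset.prod_mul_distrib]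
  have hint2 : ∀ ι : Fin n → Fin d,
      Integrable (fun θ => ∏ j, (c j (ι j) * (θ (ι j) - θ₀ (ι j)))) ν := by
    intro ι
    rw [hfac ι]
    exact (hint ι).const_mul _
  rw [integral_congr_ae (Filter.Eventually.of_forall hpt),
    integral_finset_sum _ (fun ι _ => hint2 ι)]
  refine Finset.sum_congr rfl fun ι _ => ?_
  rw [hfac ι, integral_const_mul]
  ring

lemma poly_list_rep (M : ℝ) :
    ∀ L : List ℝ, (∀ β ∈ L, |β| ≤ M) →
    ∃ q : ℕ → ℝ, q L.length = 1 ∧ (∀ j, L.length < j → q j = 0) ∧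
      (∀ x : ℝ, (L.map (fun β => x - β)).prod
        = ∑ j ∈ Finset.range (L.length + 1), q j * x ^ j) ∧
      (∑ j ∈ Finset.range (L.length + 1), |q j| ≤ (M + 1) ^ L.length) := by
  intro L
  induction L with
  | nil =>
    intro _
    refine ⟨fun j => if j = 0 then 1 else 0, by simp, fun j hj => by
      simp [show j ≠ 0 by omega], fun x => by simp, by simp⟩
  | cons β L ihL =>
    intro hb
    have hβ : |β| ≤ M := hb β (List.mem_cons_self)
    obtain ⟨q, hqtop, hqzero, hqid, hql1⟩ := ihL fun β' hβ' => hb β' (List.mem_cons_of_mem β hβ')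
    set D := L.length with hD
    set q' : ℕ → ℝ := fun j => (if j = 0 then 0 else q (j - 1)) - β * q j with hq'
    have hq'app : ∀ j, q' j = (if j = 0 then 0 else q (j - 1)) - β * q j := fun j => rfl
    refine ⟨q', ?_, ?_, ?_, ?_⟩
    · simp only [List.length_cons]
      rw [hq'app, if_neg (Nat.succ_ne_zero D), Nat.succ_sub_one, hqtop,
        hqzero (D + 1) (by omega)]
      ring
    · intro j hj
      simp only [List.length_cons] at hj
      rw [hq'app, if_neg (by omega : ¬ j = 0), hqzero (j - 1) (by omega), hqzero j (by omega)]
      ring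
    · intro x
      have hLHS : ((β :: L).map (fun b => x - b)).prod
          = (x - β) * ∑ j ∈ Finset.range (D + 1), q j * x ^ j := by
        rw [List.map_cons, List.prod_cons, hqid x]
      rw [hLHS]
      simp only [List.length_cons]
      have hsplit : ∑ j ∈ Finset.range (D + 1 + 1), q' j * x ^ j
          = (∑ j ∈ Finset.range (D + 1 + 1), (if j = 0 then (0:ℝ) else q (j - 1)) * x ^ j)
            - β * ∑ j ∈ Finset.range (D + 1 + 1), q j * x ^ j := by
        rw [Finset.mul_sum, ← Finset.sum_sub_distrib]
        exact Finset.sum_congr rfl fun j _ => by rw [hq'app]; ring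
      rw [hsplit]
      have h1 : ∑ j ∈ Finset.range (D + 1 + 1), (if j = 0 then (0:ℝ) else q (j - 1)) * x ^ j
          = ∑ j ∈ Finset.range (D + 1), q j * x ^ (j + 1) := by
        rw [Finset.sum_range_succ']
        simp
      have h2 : ∑ j ∈ Finset.range (D + 1 + 1), q j * x ^ j
          = ∑ j ∈ Finset.range (D + 1), q j * x ^ j := by
        rw [Finset.sum_range_succ, hqzero (D + 1) (by omega)]
        simp
      rw [h1, h2, Finset.mul_sum, Finset.mul_sum, ← Finset.sum_sub_distrib]
      exact Finset.sum_congr rfl fun j _ => by ring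
    · simp only [List.length_cons]
      have hstep : ∑ j ∈ Finset.range (D + 1 + 1), |q' j|
          ≤ (∑ j ∈ Finset.range (D + 1 + 1), |if j = 0 then (0:ℝ) else q (j - 1)|)
            + |β| * ∑ j ∈ Finset.range (D + 1 + 1), |q j| := by
        rw [Finset.mul_sum, ← Finset.sum_add_distrib]
        refine Finset.sum_le_sum fun j _ => ?_
        rw [hq'app]
        calc |(if j = 0 then 0 else q (j - 1)) - β * q j|
            ≤ |if j = 0 then (0:ℝ) else q (j - 1)| + |β * q j| := abs_sub _ _
          _ = |if j = 0 then (0:ℝ) else q (j - 1)| + |β| * |q j| := by rw [abs_mul]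
      have h1 : ∑ j ∈ Finset.range (D + 1 + 1), |if j = 0 then (0:ℝ) else q (j - 1)|
          = ∑ j ∈ Finset.range (D + 1), |q j| := by
        rw [Finset.sum_range_succ']
        simp
      have h2 : ∑ j ∈ Finset.range (D + 1 + 1), |q j|
          = ∑ j ∈ Finset.range (D + 1), |q j| := by
        rw [Finset.sum_range_succ, hqzero (D + 1) (by omega)]
        simp
      refine hstep.trans ?_
      rw [h1, h2]
      have hM0' : (0:ℝ) ≤ M := le_trans (abs_nonneg β) hβ
      calc (∑ j ∈ Finset.range (D + 1), |q j|) + |β| * ∑ j ∈ Finset.range (D + 1), |q j|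
          = (1 + |β|) * ∑ j ∈ Finset.range (D + 1), |q j| := by ring
        _ ≤ (1 + M) * (M + 1) ^ D := by
            refine mul_le_mul (by linarith) hql1 (Finset.sum_nonneg fun j _ => abs_nonneg _)
              (by linarith)
        _ = (M + 1) ^ (D + 1) := by rw [pow_succ]; ring
end meas

theorem multivariate_moment_comparison
    (d : ℕ) (hd : 0 < d) (Θ : Set (Fin d → ℝ)) (θ₀ : Fin d → ℝ) (hθ₀ : θ₀ ∈ Θ)
    (M : ℝ)
    (hM : IsLUB ((fun θ => Real.sqrt (∑ l, (θ l - θ₀ l) ^ 2)) '' Θ) M)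
    (J : ℕ) (hJ : 1 ≤ J)
    (g g₀ : Measure (Fin d → ℝ)) [IsProbabilityMeasure g] [IsProbabilityMeasure g₀]
    (hgΘ : g Θᶜ = 0) (hg₀Θ : g₀ Θᶜ = 0)
    (S : Finset (Fin d → ℝ)) (hScard : S.card ≤ J) (hS : g₀ (↑S : Set (Fin d → ℝ))ᶜ = 0)
    (Δ : ℝ) (hne : (Finset.Icc 1 (2 * J)).Nonempty)
    (hΔ : Δ = (Finset.Icc 1 (2 * J)).sup' hne
      (fun j => tensorSpecNorm
        (fun ι : Fin j → Fin d => momentTensor d j θ₀ g ι - momentTensor d j θ₀ g₀ ι)))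
    (k : ℕ) (hk : 2 * J < k) :
    tensorSpecNorm
        (fun ι : Fin k → Fin d => momentTensor d k θ₀ g ι - momentTensor d k θ₀ g₀ ι) ≤
      (k : ℝ) * (M + 1) ^ (2 * J * k) * Δ := by
  classical
  -- basic bounds
  have hM0 : 0 ≤ M := by
    have h0mem : Real.sqrt (∑ l, (θ₀ l - θ₀ l) ^ 2) ≤ M := hM.1 ⟨θ₀, hθ₀, rfl⟩
    simpa using h0mem
  have hM1 : (1:ℝ) ≤ M + 1 := by linarith
  have hsq : ∀ θ ∈ Θ, ∑ l, (θ l - θ₀ l) ^ 2 ≤ M ^ 2 := by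
    intro θ hθ
    have h1 : Real.sqrt (∑ l, (θ l - θ₀ l) ^ 2) ≤ M := hM.1 ⟨θ, hθ, rfl⟩
    have h2 : (0:ℝ) ≤ ∑ l, (θ l - θ₀ l) ^ 2 := Finset.sum_nonneg fun l _ => sq_nonneg _
    calc ∑ l, (θ l - θ₀ l) ^ 2 = Real.sqrt (∑ l, (θ l - θ₀ l) ^ 2) ^ 2 :=
          (Real.sq_sqrt h2).symm
      _ ≤ M ^ 2 := pow_le_pow_left₀ (Real.sqrt_nonneg _) h1 2
  have hbd : ∀ θ ∈ Θ, ∀ i, |θ i - θ₀ i| ≤ M := by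
    intro θ hθ i
    have h1 : (θ i - θ₀ i) ^ 2 ≤ M ^ 2 :=
      le_trans (Finset.single_le_sum (f := fun l => (θ l - θ₀ l) ^ 2)
        (fun l _ => sq_nonneg _) (mem_univ i)) (hsq θ hθ)
    calc |θ i - θ₀ i| = Real.sqrt ((θ i - θ₀ i) ^ 2) := (Real.sqrt_sq_eq_abs _).symm
      _ ≤ Real.sqrt (M ^ 2) := Real.sqrt_le_sqrt h1
      _ = M := Real.sqrt_sq hM0
  have htbd : ∀ c : Fin d → ℝ, (∑ i, c i ^ 2 = 1) → ∀ θ ∈ Θ,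
      |∑ i, c i * (θ i - θ₀ i)| ≤ M := by
    intro c hc θ hθ
    have hcs := Finset.sum_mul_sq_le_sq_mul_sq univ c (fun i => θ i - θ₀ i)
    rw [hc, one_mul] at hcs
    have h2 : (∑ i, c i * (θ i - θ₀ i)) ^ 2 ≤ M ^ 2 := hcs.trans (hsq θ hθ)
    calc |∑ i, c i * (θ i - θ₀ i)| = Real.sqrt ((∑ i, c i * (θ i - θ₀ i)) ^ 2) :=
          (Real.sqrt_sq_eq_abs _).symm
      _ ≤ Real.sqrt (M ^ 2) := Real.sqrt_le_sqrt h2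
      _ = M := Real.sqrt_sq hM0
  have htcont : ∀ c : Fin d → ℝ, Continuous fun θ : Fin d → ℝ => ∑ i, c i * (θ i - θ₀ i) :=
    fun c => continuous_finset_sum _ fun i _ =>
      continuous_const.mul ((continuous_apply i).sub continuous_const)
  have haeg : ∀ᵐ θ ∂g, θ ∈ Θ := by rw [MeasureTheory.ae_iff]; exact hgΘ
  -- the good support
  set S' : Finset (Fin d → ℝ) := S.filter (fun a => g₀ {a} ≠ 0) with hS'def
  have hS'sub : ∀ a ∈ S', a ∈ Θ := by
    intro a ha
    by_contra hnot
    have h1 : ({a} : Set (Fin d → ℝ)) ⊆ Θᶜ := by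
      intro z hz; rw [Set.mem_singleton_iff] at hz; rw [hz]; exact hnot
    exact (Finset.mem_filter.mp ha).2 (measure_mono_null h1 hg₀Θ)
  have hS'ae : g₀ (↑S' : Set (Fin d → ℝ))ᶜ = 0 := by
    have hsub : (↑S' : Set (Fin d → ℝ))ᶜ ⊆ (↑S : Set (Fin d → ℝ))ᶜ ∪ ↑(S \ S') := by
      intro θ hθ
      by_cases h : θ ∈ (↑S : Set (Fin d → ℝ))
      · right
        simp only [Finset.coe_sdiff, Set.mem_diff]
        exact ⟨h, hθ⟩
      · exact Or.inl h
    refine measure_mono_null hsub (le_antisymm ?_ (zero_le))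
    refine le_trans (measure_union_le _ _) ?_
    have h2 : g₀ ↑(S \ S') = 0 := by
      have hb : (↑(S \ S') : Set (Fin d → ℝ)) ⊆ ⋃ a ∈ (S \ S'), ({a} : Set (Fin d → ℝ)) := by
        intro z hz
        rw [Set.mem_iUnion₂]
        exact ⟨z, Finset.mem_coe.mp hz, rfl⟩
      refine le_antisymm (le_trans (measure_mono hb)
        (le_trans (measure_biUnion_finset_le _ _) ?_)) (zero_le)
      have : ∀ a ∈ S \ S', g₀ {a} = 0 := by
        intro a ha
        rw [Finset.mem_sdiff, hS'def] at ha
        by_contra hne0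
        exact ha.2 (Finset.mem_filter.mpr ⟨ha.1, hne0⟩)
      rw [Finset.sum_congr rfl this]
      simp
    rw [hS, h2]
    simp
  have haeS' : ∀ᵐ θ ∂g₀, θ ∈ (↑S' : Set (Fin d → ℝ)) := by
    rw [MeasureTheory.ae_iff]; exact hS'ae
  have hS'ne : S'.Nonempty := by
    by_contra h
    rw [Finset.not_nonempty_iff_eq_empty] at h
    have h1 : (↑S' : Set (Fin d → ℝ))ᶜ = Set.univ := by rw [h]; simp
    have h2 : g₀ Set.univ = 0 := h1 ▸ hS'ae
    simp [measure_univ] at h2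
  have hS'card : S'.card ≤ J := le_trans (Finset.card_filter_le _ _) hScard
  -- integrability of powers
  have hintpow : ∀ (ν : Measure (Fin d → ℝ)) [IsProbabilityMeasure ν], ν Θᶜ = 0 →
      ∀ (c : Fin d → ℝ), (∑ i, c i ^ 2 = 1) → ∀ m : ℕ,
      Integrable (fun θ => (∑ i, c i * (θ i - θ₀ i)) ^ m) ν := by
    intro ν _ hν c hc m
    refine integrable_of_boundTheta Θ ν hν _ ((htcont c).pow m) (M ^ m) fun θ hθ => ?_
    rw [abs_pow]
    exact pow_le_pow_left₀ (abs_nonneg _) (htbd c hc θ hθ) m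
  -- tensor expansion
  have hmom_perm : ∀ (n : ℕ) (e : Equiv.Perm (Fin n)) (ι : Fin n → Fin d),
      (fun ι : Fin n → Fin d => momentTensor d n θ₀ g ι - momentTensor d n θ₀ g₀ ι) (ι ∘ e)
        = (fun ι : Fin n → Fin d => momentTensor d n θ₀ g ι - momentTensor d n θ₀ g₀ ι) ι := by
    intro n e ι
    have hper : ∀ ν : Measure (Fin d → ℝ), momentTensor d n θ₀ ν (ι ∘ e)
        = momentTensor d n θ₀ ν ι := by
      intro ν
      unfold momentTensor
      congr 1
      funext θ
      exact Equiv.prod_comp e (fun j => θ (ι j) - θ₀ (ι j))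
    simp only [hper]
  have hexp : ∀ (n : ℕ) (c : Fin n → Fin d → ℝ),
      tensorInner (fun ι : Fin n → Fin d =>
          momentTensor d n θ₀ g ι - momentTensor d n θ₀ g₀ ι) c
        = (∫ θ, ∏ j, (∑ i, c j i * (θ i - θ₀ i)) ∂g)
          - ∫ θ, ∏ j, (∑ i, c j i * (θ i - θ₀ i)) ∂g₀ := by
    intro n c
    unfold tensorInner momentTensor
    rw [show (∑ ι : Fin n → Fin d,
        ((∫ θ, ∏ j, (θ (ι j) - θ₀ (ι j)) ∂g) - ∫ θ, ∏ j, (θ (ι j) - θ₀ (ι j)) ∂g₀)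
          * ∏ j, c j (ι j))
        = (∑ ι : Fin n → Fin d, (∫ θ, ∏ j, (θ (ι j) - θ₀ (ι j)) ∂g) * ∏ j, c j (ι j))
          - ∑ ι : Fin n → Fin d, (∫ θ, ∏ j, (θ (ι j) - θ₀ (ι j)) ∂g₀) * ∏ j, c j (ι j) by
      rw [← Finset.sum_sub_distrib]; exact Finset.sum_congr rfl fun ι _ => by ring]
    rw [integral_prod_expand Θ θ₀ M hM0 hbd g hgΘ n c,
      integral_prod_expand Θ θ₀ M hM0 hbd g₀ hg₀Θ n c]
  have hdiag : ∀ (n : ℕ) (c : Fin d → ℝ) (ν : Measure (Fin d → ℝ)),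
      (∫ θ, ∏ _j : Fin n, (∑ i, c i * (θ i - θ₀ i)) ∂ν)
        = ∫ θ, (∑ i, c i * (θ i - θ₀ i)) ^ n ∂ν := by
    intro n c ν
    congr 1
    funext θ
    rw [Finset.prod_const, Finset.card_univ, Fintype.card_fin]
  -- moment closeness at low orders
  have hEbound : ∀ n : ℕ, 1 ≤ n → n ≤ 2 * J → ∀ c : Fin d → ℝ, (∑ i, c i ^ 2 = 1) →
      |(∫ θ, (∑ i, c i * (θ i - θ₀ i)) ^ n ∂g)
        - ∫ θ, (∑ i, c i * (θ i - θ₀ i)) ^ n ∂g₀| ≤ Δ := by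
    intro n hn1 hn2 c hc
    have h1 := hexp n (fun _ => c)
    rw [hdiag n c g, hdiag n c g₀] at h1
    rw [← h1]
    refine (abs_tensorInner_le_specNorm (by omega) _ _ (fun _ => hc)).trans ?_
    rw [hΔ]
    exact Finset.le_sup' (f := fun j => tensorSpecNorm
      (fun ι : Fin j → Fin d => momentTensor d j θ₀ g ι - momentTensor d j θ₀ g₀ ι))
      (Finset.mem_Icc.mpr ⟨hn1, hn2⟩)
  have hΔ0 : 0 ≤ Δ := by
    obtain ⟨c0, hc0⟩ := exists_unit_vec hd
    exact le_trans (abs_nonneg _) (hEbound 1 le_rfl (by omega) c0 hc0)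
  -- the bound function
  set B : ℕ → ℝ := fun m => (m : ℝ) * (M + 1) ^ (2 * J * m) * Δ with hB
  have hB0 : ∀ m, 0 ≤ B m := fun m =>
    mul_nonneg (mul_nonneg (Nat.cast_nonneg m) (pow_nonneg (by linarith) _)) hΔ0
  have hBmono : ∀ m m' : ℕ, m ≤ m' → B m ≤ B m' := by
    intro m m' hmm
    refine mul_le_mul_of_nonneg_right ?_ hΔ0
    refine mul_le_mul (by exact_mod_cast hmm) (pow_le_pow_right₀ hM1 ?_)
      (pow_nonneg (by linarith) _) (Nat.cast_nonneg _)
    exact Nat.mul_le_mul_left _ hmm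
  -- main induction
  have key : ∀ n : ℕ, ∀ c : Fin d → ℝ, (∑ i, c i ^ 2 = 1) → 1 ≤ n →
      |(∫ θ, (∑ i, c i * (θ i - θ₀ i)) ^ n ∂g)
        - ∫ θ, (∑ i, c i * (θ i - θ₀ i)) ^ n ∂g₀| ≤ B n := by
    intro n
    induction n using Nat.strong_induction_on with
    | _ n ih =>
      intro c hc hn1
      by_cases hn2 : n ≤ 2 * J
      · refine (hEbound n hn1 hn2 c hc).trans ?_
        have hp : (1:ℝ) ≤ (M + 1) ^ (2 * J * n) := one_le_pow₀ hM1
        have hnR : (1:ℝ) ≤ (n : ℝ) := by exact_mod_cast hn1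
        have hnp : (1:ℝ) ≤ (n : ℝ) * (M + 1) ^ (2 * J * n) := by nlinarith
        calc Δ = 1 * Δ := by ring
          _ ≤ ((n : ℝ) * (M + 1) ^ (2 * J * n)) * Δ :=
              mul_le_mul_of_nonneg_right hnp hΔ0
          _ = B n := by rw [hB]
      · push_neg at hn2
        -- setup
        set t : (Fin d → ℝ) → ℝ := fun θ => ∑ i, c i * (θ i - θ₀ i) with ht
        set L : List ℝ := S'.toList.map t ++ S'.toList.map t with hL
        have hLmem : ∀ β ∈ L, |β| ≤ M := by
          intro β hβ
          rw [hL, List.mem_append] at hβ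
          have : β ∈ S'.toList.map t := by rcases hβ with h | h <;> exact h
          rw [List.mem_map] at this
          obtain ⟨a, haL, rfl⟩ := this
          exact htbd c hc a (hS'sub a (Finset.mem_toList.mp haL))
        obtain ⟨q, hqtop, hqzero, hqid, hql1⟩ := poly_list_rep M L hLmem
        set D : ℕ := L.length with hD
        have hDval : D = 2 * S'.card := by
          rw [hD, hL, List.length_append, List.length_map, Finset.length_toList]
          ring
        have hD2 : 2 ≤ D := by
          rw [hDval]
          have := Finset.card_pos.mpr hS'ne
          omega
        have hDle : D ≤ 2 * J := by rw [hDval]; omega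
        have hDn : D < n := by omega
        set P : ℝ → ℝ := fun x => (∏ a ∈ S', (x - t a)) ^ 2 with hP
        have hlistP : ∀ x : ℝ, (L.map (fun β => x - β)).prod = P x := by
          intro x
          rw [hL, List.map_append, List.prod_append, List.map_map, Finset.prod_map_toList]
          simp only [hP, Function.comp]
          ring
        have hqid' : ∀ x : ℝ, P x = ∑ j ∈ Finset.range (D + 1), q j * x ^ j := by
          intro x; rw [← hlistP x]; exact hqid x
        have hP0 : ∀ a ∈ S', P (t a) = 0 := by
          intro a ha
          simp only [hP]
          have hz : (∏ b ∈ S', (t a - t b)) = 0 := Finset.prod_eq_zero ha (sub_self (t a))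
          rw [hz]
          norm_num
        have hPpos : ∀ x, 0 ≤ P x := fun x => sq_nonneg _
        have hPcont : Continuous fun θ => P (t θ) :=
          ((continuous_finset_prod _ fun a _ => (htcont c).sub continuous_const).pow 2)
        have hPbd : ∀ θ ∈ Θ, |P (t θ)| ≤ ((2 * M) ^ S'.card) ^ 2 := by
          intro θ hθ
          simp only [hP]
          rw [abs_pow]
          refine pow_le_pow_left₀ (abs_nonneg _) ?_ 2
          rw [Finset.abs_prod]
          calc ∏ a ∈ S', |t θ - t a| ≤ ∏ _a ∈ S', (2 * M) := by
                refine Finset.prod_le_prod (fun a _ => abs_nonneg _) fun a ha => ?_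
                calc |t θ - t a| ≤ |t θ| + |t a| := abs_sub _ _
                  _ ≤ M + M := add_le_add (htbd c hc θ hθ) (htbd c hc a (hS'sub a ha))
                  _ = 2 * M := by ring
            _ = (2 * M) ^ S'.card := by rw [Finset.prod_const]
        -- integrability
        have hintP : ∀ (ν : Measure (Fin d → ℝ)) [IsProbabilityMeasure ν], ν Θᶜ = 0 →
            Integrable (fun θ => P (t θ)) ν := by
          intro ν _ hν
          exact integrable_of_boundTheta Θ ν hν _ hPcont _ hPbd
        have hintPt : ∀ (ν : Measure (Fin d → ℝ)) [IsProbabilityMeasure ν], ν Θᶜ = 0 →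
            Integrable (fun θ => t θ ^ (n - D) * P (t θ)) ν := by
          intro ν _ hν
          refine integrable_of_boundTheta Θ ν hν _ (((htcont c).pow _).mul hPcont)
            (M ^ (n - D) * ((2 * M) ^ S'.card) ^ 2) fun θ hθ => ?_
          rw [abs_mul, abs_pow]
          refine mul_le_mul (pow_le_pow_left₀ (abs_nonneg _) (htbd c hc θ hθ) _)
            (hPbd θ hθ) (abs_nonneg _) (pow_nonneg hM0 _)
        -- the division identity
        have hid : ∀ x : ℝ, x ^ n
            = x ^ (n - D) * P x - ∑ j ∈ Finset.range D, q j * x ^ (n - D + j) := by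
          intro x
          have h1 : x ^ (n - D) * P x
              = ∑ j ∈ Finset.range (D + 1), q j * x ^ (n - D + j) := by
            rw [hqid' x, Finset.mul_sum]
            exact Finset.sum_congr rfl fun j _ => by rw [pow_add]; ring
          rw [h1, Finset.sum_range_succ, hqtop, Nat.sub_add_cancel hDn.le]
          ring
        -- integral identities
        have hIint : ∀ (ν : Measure (Fin d → ℝ)) [IsProbabilityMeasure ν], ν Θᶜ = 0 →
            ∫ θ, t θ ^ n ∂ν = (∫ θ, t θ ^ (n - D) * P (t θ) ∂ν)
              - ∑ j ∈ Finset.range D, q j * ∫ θ, t θ ^ (n - D + j) ∂ν := by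
          intro ν _ hν
          have h1 : ∫ θ, t θ ^ n ∂ν = ∫ θ, (t θ ^ (n - D) * P (t θ)
              - ∑ j ∈ Finset.range D, q j * t θ ^ (n - D + j)) ∂ν :=
            integral_congr_ae (Filter.Eventually.of_forall fun θ => hid (t θ))
          rw [h1, integral_sub (hintPt ν hν) (integrable_finset_sum _ fun j _ =>
            ((hintpow ν hν c hc (n - D + j)).const_mul _)),
            integral_finset_sum _ fun j _ => ((hintpow ν hν c hc (n - D + j)).const_mul _)]
          congr 1
          exact Finset.sum_congr rfl fun j _ => integral_const_mul _ _
        have hPg₀0 : ∀ᵐ θ ∂g₀, P (t θ) = 0 :=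
          haeS'.mono fun θ hθ => hP0 θ (by exact_mod_cast hθ)
        have hIg₀P : ∫ θ, t θ ^ (n - D) * P (t θ) ∂g₀ = 0 := by
          refine integral_eq_zero_of_ae (hPg₀0.mono fun θ hθ => ?_)
          simp [hθ]
        -- expansion of ∫ P
        have hPint_exp : ∀ (ν : Measure (Fin d → ℝ)) [IsProbabilityMeasure ν], ν Θᶜ = 0 →
            ∫ θ, P (t θ) ∂ν = ∑ j ∈ Finset.range (D + 1), q j * ∫ θ, t θ ^ j ∂ν := by
          intro ν _ hν
          have h1 : ∫ θ, P (t θ) ∂ν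
              = ∫ θ, (∑ j ∈ Finset.range (D + 1), q j * t θ ^ j) ∂ν :=
            integral_congr_ae (Filter.Eventually.of_forall fun θ => hqid' (t θ))
          rw [h1, integral_finset_sum _ fun j _ => ((hintpow ν hν c hc j).const_mul _)]
          exact Finset.sum_congr rfl fun j _ => integral_const_mul _ _
        have hE0 : (∫ θ, t θ ^ 0 ∂g) - ∫ θ, t θ ^ 0 ∂g₀ = 0 := by
          simp
        have habsE : ∀ j, j ≤ D → |(∫ θ, t θ ^ j ∂g) - ∫ θ, t θ ^ j ∂g₀| ≤ Δ := by
          intro j hj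
          rcases Nat.eq_zero_or_pos j with rfl | hj1
          · rw [hE0]; simpa using hΔ0
          · exact hEbound j hj1 (hj.trans hDle) c hc
        have hPgle : ∫ θ, P (t θ) ∂g ≤ (M + 1) ^ (2 * J) * Δ := by
          have h1 : ∫ θ, P (t θ) ∂g₀ = 0 := by
            rw [integral_eq_zero_of_ae hPg₀0]
          have h2 : ∫ θ, P (t θ) ∂g = (∫ θ, P (t θ) ∂g) - ∫ θ, P (t θ) ∂g₀ := by
            rw [h1]; ring
          rw [h2, hPint_exp g hgΘ, hPint_exp g₀ hg₀Θ, ← Finset.sum_sub_distrib]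
          have h3 : ∑ j ∈ Finset.range (D + 1),
              (q j * ∫ θ, t θ ^ j ∂g - q j * ∫ θ, t θ ^ j ∂g₀)
              = ∑ j ∈ Finset.range (D + 1),
                q j * ((∫ θ, t θ ^ j ∂g) - ∫ θ, t θ ^ j ∂g₀) :=
            Finset.sum_congr rfl fun j _ => by ring
          rw [h3]
          refine le_trans (le_abs_self _) ?_
          refine le_trans (Finset.abs_sum_le_sum_abs _ _) ?_
          have h4 : ∀ j ∈ Finset.range (D + 1),
              |q j * ((∫ θ, t θ ^ j ∂g) - ∫ θ, t θ ^ j ∂g₀)| ≤ |q j| * Δ := by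
            intro j hj
            rw [abs_mul]
            exact mul_le_mul_of_nonneg_left
              (habsE j (by have := Finset.mem_range.mp hj; omega)) (abs_nonneg _)
          refine le_trans (Finset.sum_le_sum h4) ?_
          rw [← Finset.sum_mul]
          refine mul_le_mul_of_nonneg_right ?_ hΔ0
          exact hql1.trans (pow_le_pow_right₀ hM1 hDle)
        -- bound for first term
        have hPgpos : 0 ≤ ∫ θ, P (t θ) ∂g :=
          integral_nonneg fun θ => hPpos (t θ)
        have h1 : |∫ θ, t θ ^ (n - D) * P (t θ) ∂g| ≤ M ^ (n - D) * ((M + 1) ^ (2 * J) * Δ) := by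
          have habs := MeasureTheory.norm_integral_le_integral_norm
            (μ := g) (fun θ => t θ ^ (n - D) * P (t θ))
          simp only [Real.norm_eq_abs] at habs
          refine le_trans habs ?_
          have hmono : ∫ θ, |t θ ^ (n - D) * P (t θ)| ∂g
              ≤ ∫ θ, M ^ (n - D) * P (t θ) ∂g := by
            refine integral_mono_ae ((hintPt g hgΘ).abs) ((hintP g hgΘ).const_mul _) ?_
            refine haeg.mono fun θ hθ => ?_
            show |t θ ^ (n - D) * P (t θ)| ≤ M ^ (n - D) * P (t θ)
            rw [abs_mul, abs_pow, abs_of_nonneg (hPpos (t θ))]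
            exact mul_le_mul_of_nonneg_right
              (pow_le_pow_left₀ (abs_nonneg _) (htbd c hc θ hθ) _) (hPpos (t θ))
          refine hmono.trans ?_
          rw [integral_const_mul]
          exact mul_le_mul_of_nonneg_left hPgle (pow_nonneg hM0 _)
        have h1' : M ^ (n - D) * ((M + 1) ^ (2 * J) * Δ) ≤ (M + 1) ^ (2 * J * n) * Δ := by
          have hexpN : n - D + 2 * J ≤ 2 * J * n := by
            have ha : n + 2 * J ≤ 2 * J * n := by
              obtain ⟨m, rfl⟩ : ∃ m, n = m + 1 := ⟨n - 1, by omega⟩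
              have hm : 2 * J ≤ m := by omega
              have h2m : 2 * m ≤ 2 * J * m := Nat.mul_le_mul_right m (by omega)
              have : 2 * J * (m + 1) = 2 * J * m + 2 * J := by ring
              omega
            omega
          calc M ^ (n - D) * ((M + 1) ^ (2 * J) * Δ)
              ≤ (M + 1) ^ (n - D) * ((M + 1) ^ (2 * J) * Δ) := by
                refine mul_le_mul_of_nonneg_right
                  (pow_le_pow_left₀ hM0 (by linarith) _) ?_
                exact mul_nonneg (pow_nonneg (by linarith) _) hΔ0
            _ = (M + 1) ^ (n - D + 2 * J) * Δ := by rw [pow_add]; ring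
            _ ≤ (M + 1) ^ (2 * J * n) * Δ :=
                mul_le_mul_of_nonneg_right (pow_le_pow_right₀ hM1 hexpN) hΔ0
        -- bound for second term
        have h2 : |∑ j ∈ Finset.range D, q j *
            ((∫ θ, t θ ^ (n - D + j) ∂g) - ∫ θ, t θ ^ (n - D + j) ∂g₀)|
            ≤ (M + 1) ^ (2 * J) * B (n - 1) := by
          refine le_trans (Finset.abs_sum_le_sum_abs _ _) ?_
          have h4 : ∀ j ∈ Finset.range D, |q j *
              ((∫ θ, t θ ^ (n - D + j) ∂g) - ∫ θ, t θ ^ (n - D + j) ∂g₀)|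
              ≤ |q j| * B (n - 1) := by
            intro j hj
            rw [abs_mul]
            refine mul_le_mul_of_nonneg_left ?_ (abs_nonneg _)
            have hjD := Finset.mem_range.mp hj
            refine le_trans (ih (n - D + j) (by omega) c hc (by omega)) ?_
            exact hBmono _ _ (by omega)
          refine le_trans (Finset.sum_le_sum h4) ?_
          rw [← Finset.sum_mul]
          refine mul_le_mul_of_nonneg_right ?_ (hB0 _)
          have h5 : ∑ j ∈ Finset.range D, |q j| ≤ ∑ j ∈ Finset.range (D + 1), |q j| :=
            Finset.sum_le_sum_of_subset_of_nonneg
              (Finset.range_subset_range.mpr (by omega)) fun j _ _ => abs_nonneg _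
          exact h5.trans (hql1.trans (pow_le_pow_right₀ hM1 hDle))
        -- assemble
        have hEn : (∫ θ, t θ ^ n ∂g) - ∫ θ, t θ ^ n ∂g₀
            = (∫ θ, t θ ^ (n - D) * P (t θ) ∂g)
              - ∑ j ∈ Finset.range D, q j *
                ((∫ θ, t θ ^ (n - D + j) ∂g) - ∫ θ, t θ ^ (n - D + j) ∂g₀) := by
          rw [hIint g hgΘ, hIint g₀ hg₀Θ, hIg₀P]
          rw [show ∑ j ∈ Finset.range D, q j *
              ((∫ θ, t θ ^ (n - D + j) ∂g) - ∫ θ, t θ ^ (n - D + j) ∂g₀)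
              = (∑ j ∈ Finset.range D, q j * ∫ θ, t θ ^ (n - D + j) ∂g)
                - ∑ j ∈ Finset.range D, q j * ∫ θ, t θ ^ (n - D + j) ∂g₀ by
            rw [← Finset.sum_sub_distrib]; exact Finset.sum_congr rfl fun j _ => by ring]
          ring
        have hfinal : |(∫ θ, t θ ^ n ∂g) - ∫ θ, t θ ^ n ∂g₀|
            ≤ (M + 1) ^ (2 * J * n) * Δ + (M + 1) ^ (2 * J) * B (n - 1) := by
          rw [hEn]
          refine le_trans (abs_sub _ _) ?_
          exact add_le_add (h1.trans h1') h2
        refine hfinal.trans ?_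
        have hcast : ((n - 1 : ℕ) : ℝ) = (n : ℝ) - 1 := by
          rw [Nat.cast_sub (by omega)]; norm_num
        have hpoweq : (M + 1) ^ (2 * J) * (M + 1) ^ (2 * J * (n - 1)) = (M + 1) ^ (2 * J * n) := by
          rw [← pow_add]
          congr 1
          obtain ⟨m, rfl⟩ : ∃ m, n = m + 1 := ⟨n - 1, by omega⟩
          simp only [Nat.add_sub_cancel]
          ring
        have heq : (M + 1) ^ (2 * J * n) * Δ + (M + 1) ^ (2 * J) * B (n - 1) = B n := by
          rw [hB]
          simp only
          rw [hcast, ← hpoweq]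
          ring
        rw [heq]
  -- final assembly via Banach
  obtain ⟨u, huunit, humax⟩ := banach_diag hd (by omega : 0 < k)
    (fun ι : Fin k → Fin d => momentTensor d k θ₀ g ι - momentTensor d k θ₀ g₀ ι)
    (fun e ι => hmom_perm k e ι)
  haveI : Nonempty {c : Fin k → Fin d → ℝ // ∀ j, ∑ i, c j i ^ 2 = 1} :=
    ⟨⟨fun _ => u, fun _ => huunit⟩⟩
  refine ciSup_le fun c => ?_
  refine le_trans (le_abs_self _) ?_
  refine le_trans (humax c.1 c.2) ?_
  have h1 := hexp k (fun _ => u)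
  rw [hdiag k u g, hdiag k u g₀] at h1
  rw [h1]
  exact key k u huunit (by omega)
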